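/- Let H ∈ ℕ and δ ∈ (0, 1/2^{H+3}). Let e_i ~ CBer(i, δ) for i ∈ [H] and B_j ~ Ber(1/2) for j ∈ [H] all be independent, and define Z_{ij} = e_{ij} + B_j (mod 2) for all 1 ≤ j ≤ i ≤ H. Then for every realization z of Z and every b ∈ 𝔽₂^H: P[B = b | Z = z] ∈ [2^{-H} - 16δ, 2^{-H} + 16δ]. Moreover, for every h ∈ [H]: P[B_h = b_h | Z = z, B_{-h} = b_{-h}] ∈ [1/2 - 16δ·2^{H+1}, 1/2 + 16δ·2^{H+1}]. -/

import Mathlib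

/-- The pmf of the `(n, δ)`-correlated Bernoulli distribution `CBer(n, δ)` on `𝔽₂ⁿ`:
the mixture `2δ · (point mass at 0) + (1 - 2δ) · Unif(𝔽₂ⁿ)`. -/
noncomputable def cberDensity (n : ℕ) (δ : ℝ) (x : Fin n → ZMod 2) : ℝ :=
  2 * δ * (if x = 0 then 1 else 0) + (1 - 2 * δ) * (1 / 2 : ℝ) ^ n

/-- The joint probability `P[B = b, Z = z]` where `B₁, ..., B_H ~ Ber(1/2)` i.i.d.,
`e_i ~ CBer(i, δ)` independently for each `i`, and `Z_{ij} = e_{ij} + B_j` for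
`(i,j) ∈ Γ(H) = {(i,j) : 1 ≤ j ≤ i ≤ H}` (coded 0-based: `i : Fin H`, `j : Fin (i+1)`).
Since `Z` and `B` determine `e = Z + B`, this is `(1/2)^H · Π_i CBer(i,δ)(z_{i,·} + b)`. -/
noncomputable def jointProb (H : ℕ) (δ : ℝ)
    (z : ((i : Fin H) × Fin (i.1 + 1)) → ZMod 2) (b : Fin H → ZMod 2) : ℝ :=
  (1 / 2 : ℝ) ^ H *
    ∏ i : Fin H, cberDensity (i.1 + 1) δ
      (fun j : Fin (i.1 + 1) =>
        z ⟨i, j⟩ + b ⟨j.1, Nat.lt_of_le_of_lt (Nat.lt_succ_iff.mp j.isLt) i.isLt⟩)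

lemma prod_one_add_le_aux {ι : Type*} (s : Finset ι) (a : ι → ℝ)
    (h0 : ∀ i ∈ s, 0 ≤ a i) (hs : ∑ i ∈ s, a i ≤ 2/3) :
    ∏ i ∈ s, (1 + a i) ≤ 1 + 3 * ∑ i ∈ s, a i := by
  induction s using Finset.cons_induction with
  | empty => simp
  | cons x t hx ih =>
    rw [Finset.prod_cons, Finset.sum_cons]
    rw [Finset.sum_cons] at hs
    have hx0 : 0 ≤ a x := h0 x (Finset.mem_cons_self x t)
    have ht0 : ∀ i ∈ t, 0 ≤ a i := fun i hi => h0 i (Finset.mem_cons_of_mem hi)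
    have htsum : 0 ≤ ∑ i ∈ t, a i := Finset.sum_nonneg ht0
    have hts : ∑ i ∈ t, a i ≤ 2/3 := by linarith
    have h1 := ih ht0 hts
    have h2 : (1 + a x) * ∏ i ∈ t, (1 + a i) ≤ (1 + a x) * (1 + 3 * ∑ i ∈ t, a i) :=
      mul_le_mul_of_nonneg_left h1 (by linarith)
    nlinarith [h2, hx0, hts, htsum]

lemma ratio_half_aux (K E q1 q2 : ℝ) (hK : 0 < K) (hE0 : 0 ≤ E)
    (hq1lo : K ≤ q1) (hq1hi : q1 ≤ (1 + E) * K)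
    (hq2lo : K ≤ q2) (hq2hi : q2 ≤ (1 + E) * K) :
    1/2 - 2 * E ≤ q1 / (q1 + q2) ∧ q1 / (q1 + q2) ≤ 1/2 + 2 * E := by
  have hden : 0 < q1 + q2 := by linarith
  constructor
  · rw [le_div_iff₀ hden]
    nlinarith [mul_le_mul_of_nonneg_left (show 2 * K ≤ q1 + q2 by linarith) hE0,
      mul_nonneg hE0 hK.le]
  · rw [div_le_iff₀ hden]
    nlinarith [mul_le_mul_of_nonneg_left (show 2 * K ≤ q1 + q2 by linarith) hE0,
      mul_nonneg hE0 hK.le]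

/-- Let `H ∈ ℕ` and `δ ∈ (0, 1/2^{H+3})`. With `e_i ~ CBer(i, δ)`,
`B_j ~ Ber(1/2)` all independent, and `Z_{ij} = e_{ij} + B_j` for `(i,j) ∈ Γ(H)`:
for every realization `z` of `Z` and every `b ∈ 𝔽₂^H`,
`P[B = b | Z = z] ∈ [2^{-H} - 16δ, 2^{-H} + 16δ]`; moreover for every `h ∈ [H]`,
`P[B_h = b_h | Z = z, B_{-h} = b_{-h}] ∈ [1/2 - 16δ·2^{H+1}, 1/2 + 16δ·2^{H+1}]`. -/
theorem conditional_latent_near_uniform (H : ℕ) (δ : ℝ)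
    (hδ : δ ∈ Set.Ioo (0 : ℝ) (1 / 2 ^ (H + 3)))
    (z : ((i : Fin H) × Fin (i.1 + 1)) → ZMod 2) (b : Fin H → ZMod 2) :
    (jointProb H δ z b / ∑ b' : Fin H → ZMod 2, jointProb H δ z b')
        ∈ Set.Icc ((1 / 2 : ℝ) ^ H - 16 * δ) ((1 / 2 : ℝ) ^ H + 16 * δ)
      ∧ ∀ h : Fin H,
        (jointProb H δ z b /
            (jointProb H δ z b + jointProb H δ z (Function.update b h (b h + 1))))
          ∈ Set.Icc (1 / 2 - 16 * δ * 2 ^ (H + 1)) (1 / 2 + 16 * δ * 2 ^ (H + 1)) := by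
  obtain ⟨hδ0, hδu⟩ := hδ
  -- basic numeric facts
  have hc0 : (0:ℝ) < 2 ^ H := by positivity
  have hc1 : (1:ℝ) ≤ 2 ^ H := by
    have := pow_le_pow_left₀ (by norm_num : (0:ℝ) ≤ 1) (by norm_num : (1:ℝ) ≤ 2) H
    simpa using this
  have hδc : δ * 2 ^ H ≤ 1 / 8 := by
    have h1 : δ * 2 ^ (H + 3) < 1 := by
      rw [lt_div_iff₀ (show (0:ℝ) < 2 ^ (H+3) by positivity)] at hδu
      linarith
    have h2 : (2:ℝ) ^ (H + 3) = 2 ^ H * 8 := by rw [pow_add]; norm_num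
    nlinarith
  have hδ8 : δ ≤ 1 / 8 := by nlinarith
  have h2δ : (3:ℝ)/4 ≤ 1 - 2 * δ := by linarith
  -- the per-factor lower bound
  set p : Fin H → ℝ := fun i => (1 - 2 * δ) * (1/2 : ℝ) ^ (i.1 + 1) with hpdef
  have hp_pos : ∀ i : Fin H, 0 < p i := by
    intro i; simp only [hpdef]; positivity
  have hcber : ∀ (n : ℕ) (x : Fin n → ZMod 2),
      (1 - 2 * δ) * (1/2 : ℝ) ^ n ≤ cberDensity n δ x ∧
      cberDensity n δ x ≤ (1 - 2 * δ) * (1/2 : ℝ) ^ n + 2 * δ := by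
    intro n x
    unfold cberDensity
    split_ifs <;> constructor <;> nlinarith [pow_pos (show (0:ℝ) < 1/2 by norm_num) n]
  set K : ℝ := ∏ i : Fin H, p i with hKdef
  have hK : 0 < K := Finset.prod_pos (fun i _ => hp_pos i)
  set E : ℝ := 16 * 2 ^ H * δ with hEdef
  have hE0 : 0 ≤ E := by positivity
  have hE2 : E ≤ 2 := by nlinarith
  -- key product bound
  have hprod : ∏ i : Fin H, (p i + 2 * δ) ≤ (1 + E) * K := by
    have hsplit : ∀ i : Fin H, p i + 2 * δ = p i * (1 + 2 * δ / p i) := by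
      intro i
      field_simp [(hp_pos i).ne']
    have heq : ∏ i : Fin H, (p i + 2 * δ) = K * ∏ i : Fin H, (1 + 2 * δ / p i) := by
      rw [hKdef, ← Finset.prod_mul_distrib]
      exact Finset.prod_congr rfl fun i _ => hsplit i
    have hsumval : ∑ i : Fin H, 2 * δ / p i = 4 * δ / (1 - 2 * δ) * (2 ^ H - 1) := by
      have h1 : ∀ i : Fin H, 2 * δ / p i = 4 * δ / (1 - 2 * δ) * 2 ^ i.1 := by
        intro i
        simp only [hpdef]
        rw [div_pow, one_pow, pow_succ]
        field_simp
        ring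
      rw [Finset.sum_congr rfl fun i _ => h1 i, ← Finset.mul_sum]
      congr 1
      rw [Fin.sum_univ_eq_sum_range (fun i => (2:ℝ) ^ i)]
      rw [geom_sum_eq (by norm_num : (2:ℝ) ≠ 1)]
      norm_num
    have hsum23 : ∑ i : Fin H, 2 * δ / p i ≤ 2/3 := by
      rw [hsumval, div_mul_eq_mul_div, div_le_iff₀ (by linarith : (0:ℝ) < 1 - 2 * δ)]
      nlinarith
    have hle := prod_one_add_le_aux Finset.univ (fun i : Fin H => 2 * δ / p i)
      (fun i _ => by positivity) hsum23
    have hsumE : 1 + 3 * ∑ i : Fin H, 2 * δ / p i ≤ 1 + E := by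
      rw [hsumval, hEdef]
      rw [div_mul_eq_mul_div, ← sub_nonneg]
      have : 1 + 16 * 2 ^ H * δ - (1 + 3 * (4 * δ * (2 ^ H - 1) / (1 - 2 * δ)))
          = (16 * 2 ^ H * δ * (1 - 2 * δ) - 12 * δ * (2 ^ H - 1)) / (1 - 2 * δ) := by
        linear_combination (-(16 * 2 ^ H * δ)) * mul_inv_cancel₀ (show (1:ℝ) - 2 * δ ≠ 0 by linarith)
      rw [this]
      apply div_nonneg _ (by linarith)
      nlinarith
    calc ∏ i : Fin H, (p i + 2 * δ) = K * ∏ i : Fin H, (1 + 2 * δ / p i) := heq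
      _ ≤ K * (1 + 3 * ∑ i : Fin H, 2 * δ / p i) := mul_le_mul_of_nonneg_left hle hK.le
      _ ≤ K * (1 + E) := mul_le_mul_of_nonneg_left hsumE hK.le
      _ = (1 + E) * K := mul_comm _ _
  -- bounds on jointProb
  set K' : ℝ := (1/2 : ℝ) ^ H * K with hK'def
  have hK' : 0 < K' := by positivity
  have hJlo : ∀ b' : Fin H → ZMod 2, K' ≤ jointProb H δ z b' := by
    intro b'
    unfold jointProb
    apply mul_le_mul_of_nonneg_left _ (by positivity : (0:ℝ) ≤ (1/2:ℝ)^H)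
    apply Finset.prod_le_prod (fun i _ => (hp_pos i).le)
    intro i _
    exact (hcber _ _).1
  have hJhi : ∀ b' : Fin H → ZMod 2, jointProb H δ z b' ≤ (1 + E) * K' := by
    intro b'
    unfold jointProb
    have h1 : ∏ i : Fin H, cberDensity (i.1 + 1) δ
        (fun j : Fin (i.1 + 1) =>
          z ⟨i, j⟩ + b' ⟨j.1, Nat.lt_of_le_of_lt (Nat.lt_succ_iff.mp j.isLt) i.isLt⟩)
        ≤ ∏ i : Fin H, (p i + 2 * δ) := by
      apply Finset.prod_le_prod
      · intro i _
        exact le_trans (hp_pos i).le (hcber _ _).1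
      · intro i _
        exact (hcber _ _).2
    calc (1/2:ℝ)^H * ∏ i : Fin H, cberDensity (i.1 + 1) δ
          (fun j : Fin (i.1 + 1) =>
            z ⟨i, j⟩ + b' ⟨j.1, Nat.lt_of_le_of_lt (Nat.lt_succ_iff.mp j.isLt) i.isLt⟩)
        ≤ (1/2:ℝ)^H * ∏ i : Fin H, (p i + 2 * δ) :=
          mul_le_mul_of_nonneg_left h1 (by positivity)
      _ ≤ (1/2:ℝ)^H * ((1 + E) * K) := mul_le_mul_of_nonneg_left hprod (by positivity)
      _ = (1 + E) * K' := by rw [hK'def]; ring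
  have hhalfpow : (1/2:ℝ)^H * 2^H = 1 := by
    rw [div_pow, one_pow]
    field_simp
  constructor
  · -- first part
    set T : ℝ := ∑ b' : Fin H → ZMod 2, jointProb H δ z b' with hTdef
    have hcard : (Finset.univ : Finset (Fin H → ZMod 2)).card = 2 ^ H := by
      simp [Fintype.card_fun]
    have hTlo : 2 ^ H * K' ≤ T := by
      have := Finset.card_nsmul_le_sum (Finset.univ : Finset (Fin H → ZMod 2))
        (jointProb H δ z) K' (fun b' _ => hJlo b')
      rw [hcard, nsmul_eq_mul] at this
      push_cast at this
      exact this
    have hThi : T ≤ 2 ^ H * ((1 + E) * K') := by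
      have := Finset.sum_le_card_nsmul (Finset.univ : Finset (Fin H → ZMod 2))
        (jointProb H δ z) ((1 + E) * K') (fun b' _ => hJhi b')
      rw [hcard, nsmul_eq_mul] at this
      push_cast at this
      exact this
    have hT0 : 0 < T := lt_of_lt_of_le (by positivity) hTlo
    constructor
    · -- lower bound
      rcases le_or_gt ((1/2:ℝ)^H - 16 * δ) 0 with hneg | hpos
      · exact le_trans hneg (div_nonneg (le_trans hK'.le (hJlo b)) hT0.le)
      · rw [le_div_iff₀ hT0]
        have h1 : ((1/2:ℝ)^H - 16 * δ) * T ≤ ((1/2:ℝ)^H - 16 * δ) * (2 ^ H * ((1 + E) * K')) :=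
          mul_le_mul_of_nonneg_left hThi hpos.le
        have h2 : ((1/2:ℝ)^H - 16 * δ) * (2 ^ H * ((1 + E) * K')) = (1 - E) * (1 + E) * K' := by
          rw [hEdef]
          have hx : ((1/2:ℝ)^H - 16*δ) * (2:ℝ)^H = 1 - 16 * 2^H * δ := by
            rw [sub_mul, hhalfpow]; ring
          linear_combination ((1 + 16 * 2^H * δ) * K') * hx
        have h3 : (1 - E) * (1 + E) * K' ≤ K' := by nlinarith
        calc ((1/2:ℝ)^H - 16 * δ) * T ≤ K' := by linarith
          _ ≤ jointProb H δ z b := hJlo b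
    · -- upper bound
      rw [div_le_iff₀ hT0]
      have h1 : ((1/2:ℝ)^H + 16 * δ) * (2 ^ H * K') ≤ ((1/2:ℝ)^H + 16 * δ) * T :=
        mul_le_mul_of_nonneg_left hTlo (by positivity)
      have h2 : ((1/2:ℝ)^H + 16 * δ) * (2 ^ H * K') = (1 + E) * K' := by
        rw [hEdef]
        have hx : ((1/2:ℝ)^H + 16*δ) * (2:ℝ)^H = 1 + 16 * 2^H * δ := by
          rw [add_mul, hhalfpow]; ring
        linear_combination K' * hx
      calc jointProb H δ z b ≤ (1 + E) * K' := hJhi b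
        _ = ((1/2:ℝ)^H + 16 * δ) * (2 ^ H * K') := h2.symm
        _ ≤ ((1/2:ℝ)^H + 16 * δ) * T := h1
  · -- second part
    intro h
    set q1 : ℝ := jointProb H δ z b with hq1def
    set q2 : ℝ := jointProb H δ z (Function.update b h (b h + 1)) with hq2def
    have hq1lo : K' ≤ q1 := hJlo b
    have hq1hi : q1 ≤ (1 + E) * K' := hJhi b
    have hq2lo : K' ≤ q2 := hJlo _
    have hq2hi : q2 ≤ (1 + E) * K' := hJhi _
    have hEt : 16 * δ * 2 ^ (H + 1) = 2 * E := by
      rw [hEdef, pow_succ]; ring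
    have hmain := ratio_half_aux K' E q1 q2 hK' hE0 hq1lo hq1hi hq2lo hq2hi
    rw [hEt]
    exact ⟨hmain.1, hmain.2⟩
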